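/- Let P be a set of n points in ℝ^d with a weight function w : P → [0,∞) whose total weight W = ∑_{q∈P} w(q) is positive, let f, g, h : P × ℝ^d → [0,∞), let z > 0, and let c₁, c₂ > 0 satisfy c₁(g(p,x)^z + h(p,x)^z) ≤ f(p,x) ≤ c₂(g(p,x)^z + h(p,x)^z) for every p ∈ P and x ∈ ℝ^d. Assume there exist c₃, c₄ > 0 with c₃·b·g(p,x) ≤ g(p,b·x) ≤ c₄·b·g(p,x) for every p ∈ P, x ∈ ℝ^d and b > 0, and c₅ > 0 with w(p)·h(p,x)^z ≤ (c₅·w(p)/W)·∑_{q∈P} w(q)·h(q,x)^z for every p ∈ P and x ∈ ℝ^d. Let D be a d×d diagonal matrix with nonnegative entries and V a d×d orthogonal matrix such that DVᵀ is invertible and for every x ∈ ℝ^d, c₁((c₃‖DVᵀx‖₂)^z + ∑_{q∈P} w(q)h(q,x)^z) ≤ ∑_{q∈P} w(q)f(q,x), and let α > 0 satisfy ∑_{q∈P} w(q)^{max{1,1/z}}·g(q,x)^{max{1,z}} ≤ (c₄·α·‖DVᵀx‖₂)^{max{1,z}} for every x ∈ ℝ^d. Suppose there exist d unit vectors v₁,…,v_d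 ∈ ℝ^d and c > 0 such that for every unit vector y ∈ ℝ^d and every p ∈ P, g(p,(DVᵀ)⁻¹y)^z ≤ c·∑_{j=1}^d g(p,(DVᵀ)⁻¹v_j)^z. Then the sum over p ∈ P of the weighted sensitivities sup_{x : ∑_{q∈P} w(q)f(q,x) > 0} w(p)f(p,x)/∑_{q∈P} w(q)f(q,x) is at most c₂c₅/c₁ + (c·c₂·c₄^z/(c₁·c₃^{2z}))·max{n^{1−z}, 1}·α^z·d. -/

import Mathlib

open Matrix

/-- The Euclidean (`ℓ₂`) norm of a vector in `ℝ^d`. -/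
noncomputable def l2 {d : ℕ} (x : Fin d → ℝ) : ℝ := Real.sqrt (∑ i, x i ^ 2)

lemma l2_nonneg {d : ℕ} (x : Fin d → ℝ) : 0 ≤ l2 x := Real.sqrt_nonneg _

lemma l2_smul {d : ℕ} (a : ℝ) (x : Fin d → ℝ) : l2 (a • x) = |a| * l2 x := by
  unfold l2
  simp only [Pi.smul_apply, smul_eq_mul, mul_pow]
  rw [← Finset.mul_sum, Real.sqrt_mul (sq_nonneg a), Real.sqrt_sq_eq_abs]

lemma l2_eq_zero {d : ℕ} {x : Fin d → ℝ} (h : l2 x = 0) : x = 0 := by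
  unfold l2 at h
  have hs : ∑ i, x i ^ 2 = 0 := by
    have h1 := Real.sqrt_eq_zero'.mp h
    have h2 : (0:ℝ) ≤ ∑ i, x i ^ 2 := Finset.sum_nonneg fun i _ => sq_nonneg _
    linarith
  funext i
  have h3 := (Finset.sum_eq_zero_iff_of_nonneg (fun i _ => sq_nonneg (x i))).mp hs i
    (Finset.mem_univ i)
  have : x i = 0 := by nlinarith
  simpa using this

/-- Jensen: for `0 < z ≤ 1`, `∑ tᵢ^z ≤ card^(1-z) (∑ tᵢ)^z`. -/
lemma sum_rpow_le {ι : Type*} (s : Finset ι) (hs : s.Nonempty) (t : ι → ℝ)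
    (ht : ∀ i ∈ s, 0 ≤ t i) {z : ℝ} (hz : 0 < z) (hz1 : z ≤ 1) :
    ∑ i ∈ s, t i ^ z ≤ (s.card : ℝ) ^ (1 - z) * (∑ i ∈ s, t i) ^ z := by
  set m : ℝ := (s.card : ℝ) with hm
  have hm0 : 0 < m := by
    have h0 := Finset.card_pos.mpr hs
    rw [hm]
    exact_mod_cast h0
  have hp : (1:ℝ) ≤ 1 / z := by rw [le_div_iff₀ hz]; linarith
  have key := Real.arith_mean_le_rpow_mean s (fun _ => 1 / m) (fun i => t i ^ z)
    (fun i _ => by positivity) (by simp [Finset.sum_const]; field_simp; exact hm.symm)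
    (fun i hi => Real.rpow_nonneg (ht i hi) z) hp
  simp only [one_div_one_div] at key
  have hsimp : ∀ i ∈ s, (t i ^ z) ^ (1/z) = t i := by
    intro i hi
    rw [← Real.rpow_mul (ht i hi), mul_one_div_cancel hz.ne', Real.rpow_one]
  have hco : (∑ x ∈ s, 1 / m * (t x ^ z) ^ (1 / z)) = ∑ x ∈ s, 1 / m * t x :=
    Finset.sum_congr rfl (fun i hi => by rw [hsimp i hi])
  rw [hco] at key
  have hT0 : 0 ≤ ∑ i ∈ s, t i := Finset.sum_nonneg ht
  have key2 : (1/m) * ∑ i ∈ s, t i ^ z ≤ ((1/m) * ∑ i ∈ s, t i) ^ z := by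
    calc (1/m) * ∑ i ∈ s, t i ^ z = ∑ i ∈ s, (1/m) * t i ^ z := by rw [Finset.mul_sum]
    _ ≤ (∑ i ∈ s, (1/m) * t i) ^ z := key
    _ = ((1/m) * ∑ i ∈ s, t i) ^ z := by rw [Finset.mul_sum]
  have hmul : ((1/m) * ∑ i ∈ s, t i) ^ z = (1/m) ^ z * (∑ i ∈ s, t i) ^ z :=
    Real.mul_rpow (by positivity) hT0
  rw [hmul] at key2
  have hpow : m * (1/m) ^ z = m ^ (1 - z) := by
    rw [Real.rpow_sub hm0, Real.rpow_one, one_div, Real.inv_rpow hm0.le, div_eq_mul_inv]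
  calc ∑ i ∈ s, t i ^ z = m * ((1/m) * ∑ i ∈ s, t i ^ z) := by field_simp
  _ ≤ m * ((1/m) ^ z * (∑ i ∈ s, t i) ^ z) := by
      exact mul_le_mul_of_nonneg_left key2 hm0.le
  _ = m ^ (1 - z) * (∑ i ∈ s, t i) ^ z := by rw [← mul_assoc, hpow]

set_option maxHeartbeats 1000000 in
/-- Weighted total sensitivity bound for near-convex functions (generalized version):
under the weighted `f`-SVD assumptions, the sum of the weighted sensitivities is at most
`c₂c₅/c₁ + (c c₂ c₄^z/(c₁ c₃^(2z)))·max{n^(1−z),1}·α^z·d`. -/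
theorem weighted_total_sensitivity_bound {d n : ℕ}
    (P : Finset (Fin d → ℝ)) (hcard : P.card = n)
    (w : (Fin d → ℝ) → ℝ) (hw : ∀ p ∈ P, 0 ≤ w p) (hW : 0 < ∑ q ∈ P, w q)
    (f g h : (Fin d → ℝ) → (Fin d → ℝ) → ℝ)
    (hf0 : ∀ p ∈ P, ∀ x, 0 ≤ f p x) (hg0 : ∀ p ∈ P, ∀ x, 0 ≤ g p x)
    (hh0 : ∀ p ∈ P, ∀ x, 0 ≤ h p x)
    (z c₁ c₂ c₃ c₄ c₅ : ℝ) (hz : 0 < z) (hc₁ : 0 < c₁) (hc₂ : 0 < c₂)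
    (hc₃ : 0 < c₃) (hc₄ : 0 < c₄) (hc₅ : 0 < c₅)
    (hsand : ∀ p ∈ P, ∀ x, c₁ * (g p x ^ z + h p x ^ z) ≤ f p x ∧
      f p x ≤ c₂ * (g p x ^ z + h p x ^ z))
    (hghom : ∀ p ∈ P, ∀ x, ∀ b : ℝ, 0 < b →
      c₃ * b * g p x ≤ g p (b • x) ∧ g p (b • x) ≤ c₄ * b * g p x)
    (hhsmall : ∀ p ∈ P, ∀ x, w p * h p x ^ z ≤
      (c₅ * w p / ∑ q ∈ P, w q) * ∑ q ∈ P, w q * h q x ^ z)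
    (D V : Matrix (Fin d) (Fin d) ℝ) (hD : D.IsDiag) (hDnn : ∀ i, 0 ≤ D i i)
    (hV : Vᵀ * V = 1 ∧ V * Vᵀ = 1) (hinv : IsUnit (D * Vᵀ))
    (hlow : ∀ x, c₁ * ((c₃ * l2 ((D * Vᵀ).mulVec x)) ^ z + ∑ q ∈ P, w q * h q x ^ z) ≤
      ∑ q ∈ P, w q * f q x)
    (α : ℝ) (hα : 0 < α)
    (hup : ∀ x, ∑ q ∈ P, w q ^ max 1 (1 / z) * g q x ^ max 1 z ≤
      (c₄ * α * l2 ((D * Vᵀ).mulVec x)) ^ max 1 z)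
    (v : Fin d → Fin d → ℝ) (hv : ∀ j, l2 (v j) = 1) (c : ℝ) (hc : 0 < c)
    (hcv : ∀ y : Fin d → ℝ, l2 y = 1 → ∀ p ∈ P,
      g p ((D * Vᵀ)⁻¹.mulVec y) ^ z ≤ c * ∑ j, g p ((D * Vᵀ)⁻¹.mulVec (v j)) ^ z) :
    ∑ p ∈ P, (⨆ x : {x : Fin d → ℝ // 0 < ∑ q ∈ P, w q * f q x},
        w p * f p (x : Fin d → ℝ) / ∑ q ∈ P, w q * f q (x : Fin d → ℝ)) ≤
      c₂ * c₅ / c₁ +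
        (c * c₂ * c₄ ^ z / (c₁ * c₃ ^ (2 * z))) * max ((n : ℝ) ^ (1 - z)) 1 * α ^ z * d := by
  classical
  have hPne : P.Nonempty := Finset.nonempty_of_ne_empty (by rintro rfl; simp at hW)
  set A := D * Vᵀ with hAdef
  set W := ∑ q ∈ P, w q with hWdef
  set M := max ((n : ℝ) ^ (1 - z)) 1 with hMdef
  have hM1 : (1:ℝ) ≤ M := le_max_right _ _
  have hdet : IsUnit A.det := (Matrix.isUnit_iff_isUnit_det A).mp hinv
  have hAB : ∀ u : Fin d → ℝ, A.mulVec (A⁻¹.mulVec u) = u := by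
    intro u
    rw [Matrix.mulVec_mulVec, Matrix.mul_nonsing_inv A hdet, Matrix.one_mulVec]
  have hBA : ∀ u : Fin d → ℝ, A⁻¹.mulVec (A.mulVec u) = u := by
    intro u
    rw [Matrix.mulVec_mulVec, Matrix.nonsing_inv_mul A hdet, Matrix.one_mulVec]
  have hc3z : (0:ℝ) < c₃ ^ z := Real.rpow_pos_of_pos hc₃ z
  have hc32z : (0:ℝ) < c₃ ^ (2*z) := Real.rpow_pos_of_pos hc₃ _
  have h2z : c₃ ^ (2*z) = c₃ ^ z * c₃ ^ z := by rw [two_mul, Real.rpow_add hc₃]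
  have hg00 : ∀ p ∈ P, g p 0 = 0 := by
    intro p hp
    have h1 := (hghom p hp 0 (2/c₃) (by positivity)).1
    rw [smul_zero] at h1
    have h2 : c₃ * (2/c₃) = 2 := by field_simp
    have h3 := hg0 p hp 0
    nlinarith
  -- per-point Gram quantity
  have hGp0 : ∀ p ∈ P, (0:ℝ) ≤ ∑ j, g p (A⁻¹.mulVec (v j)) ^ z :=
    fun p hp => Finset.sum_nonneg fun j _ => Real.rpow_nonneg (hg0 p hp _) z
  -- Step A : sensitivity bound per point
  have hsens : ∀ p ∈ P,
      (⨆ x : {x : Fin d → ℝ // 0 < ∑ q ∈ P, w q * f q x},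
        w p * f p (x : Fin d → ℝ) / ∑ q ∈ P, w q * f q (x : Fin d → ℝ)) ≤
      c₂ * c₅ / c₁ * (w p / W)
        + c * c₂ / (c₁ * c₃ ^ (2*z)) * (w p * ∑ j, g p (A⁻¹.mulVec (v j)) ^ z) := by
    intro p hp
    have hTp0 : (0:ℝ) ≤ c₂ * c₅ / c₁ * (w p / W)
        + c * c₂ / (c₁ * c₃ ^ (2*z)) * (w p * ∑ j, g p (A⁻¹.mulVec (v j)) ^ z) := by
      have h1 := hw p hp
      have h2 := hGp0 p hp
      have h3 : (0:ℝ) < c * c₂ / (c₁ * c₃ ^ (2*z)) := by positivity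
      have h4 : (0:ℝ) < c₂ * c₅ / c₁ := by positivity
      positivity
    apply Real.iSup_le _ hTp0
    rintro ⟨x, hx⟩
    set Sx := ∑ q ∈ P, w q * f q x with hSxdef
    set Hx := ∑ q ∈ P, w q * h q x ^ z with hHxdef
    set N := l2 (A.mulVec x) with hNdef
    have hH0 : (0:ℝ) ≤ Hx := Finset.sum_nonneg fun q hq =>
      mul_nonneg (hw q hq) (Real.rpow_nonneg (hh0 q hq x) z)
    have hlowx := hlow x
    have hN0 : (0:ℝ) ≤ N := l2_nonneg _
    have hNz0 : (0:ℝ) ≤ (c₃ * N) ^ z := Real.rpow_nonneg (by positivity) z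
    have hc₁H : c₁ * Hx ≤ Sx := by nlinarith
    -- split numerator
    have step1 : w p * f p x ≤ c₂ * (w p * g p x ^ z) + c₂ * (w p * h p x ^ z) := by
      have h1 := mul_le_mul_of_nonneg_left (hsand p hp x).2 (hw p hp)
      nlinarith
    -- h-part
    have hpart : c₂ * (w p * h p x ^ z) ≤ c₂ * c₅ / c₁ * (w p / W) * Sx := by
      have h1 := hhsmall p hp x
      have h2 : Hx ≤ Sx / c₁ := (le_div_iff₀ hc₁).mpr (by linarith [hc₁H, mul_comm c₁ Hx])
      have h3 : (0:ℝ) ≤ c₅ * w p / W := by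
        have := hw p hp; positivity
      calc c₂ * (w p * h p x ^ z) ≤ c₂ * ((c₅ * w p / W) * Hx) :=
            mul_le_mul_of_nonneg_left h1 hc₂.le
      _ ≤ c₂ * ((c₅ * w p / W) * (Sx / c₁)) := by
            apply mul_le_mul_of_nonneg_left _ hc₂.le
            exact mul_le_mul_of_nonneg_left h2 h3
      _ = c₂ * c₅ / c₁ * (w p / W) * Sx := by ring
    -- g-part
    have gpart : c₂ * (w p * g p x ^ z) ≤
        c * c₂ / (c₁ * c₃ ^ (2*z)) * (w p * ∑ j, g p (A⁻¹.mulVec (v j)) ^ z) * Sx := by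
      rcases eq_or_lt_of_le hN0 with hN | hN
      · -- N = 0, hence x = 0 and g p x = 0
        have hAx : A.mulVec x = 0 := l2_eq_zero hN.symm
        have hx0 : x = 0 := by
          have := hBA x
          rw [hAx, Matrix.mulVec_zero] at this
          exact this.symm
        have hgx : g p x ^ z = 0 := by
          rw [hx0, hg00 p hp, Real.zero_rpow hz.ne']
        rw [hgx, mul_zero, mul_zero]
        have h1 := hw p hp
        have h2 := hGp0 p hp
        have h3 : (0:ℝ) < c * c₂ / (c₁ * c₃ ^ (2*z)) := by positivity
        positivity
      · -- N > 0
        set y := N⁻¹ • (A.mulVec x) with hydef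
        have hy1 : l2 y = 1 := by
          rw [hydef, l2_smul, abs_of_pos (inv_pos.mpr hN), ← hNdef, inv_mul_cancel₀ hN.ne']
        have hBy : A⁻¹.mulVec y = N⁻¹ • x := by
          rw [hydef, Matrix.mulVec_smul, hBA]
        have hgle : g p x ≤ (N / c₃) * g p (A⁻¹.mulVec y) := by
          have h1 := (hghom p hp x N⁻¹ (inv_pos.mpr hN)).1
          rw [hBy]
          have h2 : (0:ℝ) ≤ N / c₃ := by positivity
          have h3 := mul_le_mul_of_nonneg_left h1 h2
          calc g p x = N / c₃ * (c₃ * N⁻¹ * g p x) := by field_simp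
          _ ≤ N / c₃ * g p (N⁻¹ • x) := h3
        have hgz : g p x ^ z ≤ (N / c₃) ^ z * (c * ∑ j, g p (A⁻¹.mulVec (v j)) ^ z) := by
          calc g p x ^ z ≤ ((N / c₃) * g p (A⁻¹.mulVec y)) ^ z :=
                Real.rpow_le_rpow (hg0 p hp x) hgle hz.le
          _ = (N / c₃) ^ z * g p (A⁻¹.mulVec y) ^ z :=
                Real.mul_rpow (by positivity) (hg0 p hp _)
          _ ≤ (N / c₃) ^ z * (c * ∑ j, g p (A⁻¹.mulVec (v j)) ^ z) := by
                apply mul_le_mul_of_nonneg_left (hcv y hy1 p hp)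
                exact Real.rpow_nonneg (by positivity) z
        have hSlow : c₁ * (c₃ ^ z * N ^ z) ≤ Sx := by
          have h1 : (c₃ * N) ^ z = c₃ ^ z * N ^ z := Real.mul_rpow hc₃.le hN0
          rw [h1] at hlowx
          nlinarith [mul_nonneg hc₁.le hH0]
        have hNz : (0:ℝ) < N ^ z := Real.rpow_pos_of_pos hN z
        have hdiv : (N / c₃) ^ z = N ^ z / c₃ ^ z := Real.div_rpow hN0 hc₃.le z
        have hKey : c₂ * (w p * ((N ^ z / c₃ ^ z) * (c * ∑ j, g p (A⁻¹.mulVec (v j)) ^ z)))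
            = c * c₂ / (c₁ * c₃ ^ (2*z)) * (w p * ∑ j, g p (A⁻¹.mulVec (v j)) ^ z)
              * (c₁ * (c₃ ^ z * N ^ z)) := by
          rw [h2z]; field_simp
        have hwp := hw p hp
        have hGp := hGp0 p hp
        calc c₂ * (w p * g p x ^ z)
            ≤ c₂ * (w p * ((N ^ z / c₃ ^ z) * (c * ∑ j, g p (A⁻¹.mulVec (v j)) ^ z))) := by
              rw [← hdiv]
              exact mul_le_mul_of_nonneg_left (mul_le_mul_of_nonneg_left hgz hwp) hc₂.le
        _ = c * c₂ / (c₁ * c₃ ^ (2*z)) * (w p * ∑ j, g p (A⁻¹.mulVec (v j)) ^ z)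
              * (c₁ * (c₃ ^ z * N ^ z)) := hKey
        _ ≤ c * c₂ / (c₁ * c₃ ^ (2*z)) * (w p * ∑ j, g p (A⁻¹.mulVec (v j)) ^ z) * Sx := by
              apply mul_le_mul_of_nonneg_left hSlow
              positivity
    -- combine
    rw [div_le_iff₀ hx]
    have hexp : (c₂ * c₅ / c₁ * (w p / W)
        + c * c₂ / (c₁ * c₃ ^ (2*z)) * (w p * ∑ j, g p (A⁻¹.mulVec (v j)) ^ z)) * Sx
        = c₂ * c₅ / c₁ * (w p / W) * Sx
          + c * c₂ / (c₁ * c₃ ^ (2*z)) * (w p * ∑ j, g p (A⁻¹.mulVec (v j)) ^ z) * Sx := by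
      ring
    rw [hexp]
    linarith
  -- Step B : bound for each direction j
  have hG : ∀ j : Fin d, ∑ p ∈ P, w p * g p (A⁻¹.mulVec (v j)) ^ z ≤ M * (c₄ * α) ^ z := by
    intro j
    set xj := A⁻¹.mulVec (v j) with hxjdef
    have hNj : l2 (A.mulVec xj) = 1 := by rw [hxjdef, hAB]; exact hv j
    have hupj := hup xj
    rw [hNj, mul_one] at hupj
    have hca0 : (0:ℝ) ≤ (c₄ * α) ^ z := Real.rpow_nonneg (by positivity) z
    rcases le_or_gt 1 z with h1z | h1z
    · rw [max_eq_right h1z, max_eq_left ((div_le_one hz).mpr h1z)] at hupj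
      simp only [Real.rpow_one] at hupj
      calc ∑ p ∈ P, w p * g p xj ^ z ≤ (c₄ * α) ^ z := hupj
      _ ≤ M * (c₄ * α) ^ z := le_mul_of_one_le_left hca0 hM1
    · rw [max_eq_left h1z.le, max_eq_right (by rw [le_div_iff₀ hz]; linarith)] at hupj
      simp only [Real.rpow_one] at hupj
      have heq : ∀ p ∈ P, w p * g p xj ^ z = (w p ^ (1/z) * g p xj) ^ z := by
        intro p hp
        rw [Real.mul_rpow (Real.rpow_nonneg (hw p hp) _) (hg0 p hp _),
          ← Real.rpow_mul (hw p hp), one_div_mul_cancel hz.ne', Real.rpow_one]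
      rw [Finset.sum_congr rfl heq]
      have ht0 : ∀ p ∈ P, (0:ℝ) ≤ w p ^ (1/z) * g p xj :=
        fun p hp => mul_nonneg (Real.rpow_nonneg (hw p hp) _) (hg0 p hp _)
      calc ∑ p ∈ P, (w p ^ (1/z) * g p xj) ^ z
          ≤ (P.card : ℝ) ^ (1 - z) * (∑ p ∈ P, w p ^ (1/z) * g p xj) ^ z :=
            sum_rpow_le P hPne _ ht0 hz h1z.le
      _ ≤ (n : ℝ) ^ (1 - z) * (c₄ * α) ^ z := by
            rw [hcard]
            apply mul_le_mul_of_nonneg_left _ (Real.rpow_nonneg (Nat.cast_nonneg n) _)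
            exact Real.rpow_le_rpow (Finset.sum_nonneg ht0) hupj hz.le
      _ ≤ M * (c₄ * α) ^ z := by
            apply mul_le_mul_of_nonneg_right (le_max_left _ _) hca0
  -- Step C : summation
  calc ∑ p ∈ P, (⨆ x : {x : Fin d → ℝ // 0 < ∑ q ∈ P, w q * f q x},
        w p * f p (x : Fin d → ℝ) / ∑ q ∈ P, w q * f q (x : Fin d → ℝ))
      ≤ ∑ p ∈ P, (c₂ * c₅ / c₁ * (w p / W)
        + c * c₂ / (c₁ * c₃ ^ (2*z)) * (w p * ∑ j, g p (A⁻¹.mulVec (v j)) ^ z)) :=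
        Finset.sum_le_sum hsens
  _ = c₂ * c₅ / c₁ + c * c₂ / (c₁ * c₃ ^ (2*z))
        * ∑ j, ∑ p ∈ P, w p * g p (A⁻¹.mulVec (v j)) ^ z := by
      rw [Finset.sum_add_distrib]
      congr 1
      · rw [← Finset.mul_sum, ← Finset.sum_div, ← hWdef, div_self hW.ne', mul_one]
      · have hps : ∀ p ∈ P, w p * ∑ j, g p (A⁻¹.mulVec (v j)) ^ z
            = ∑ j, w p * g p (A⁻¹.mulVec (v j)) ^ z := fun p _ => Finset.mul_sum _ _ _
        rw [← Finset.mul_sum, Finset.sum_congr rfl hps, Finset.sum_comm]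
  _ ≤ c₂ * c₅ / c₁ + c * c₂ / (c₁ * c₃ ^ (2*z)) * (d * (M * (c₄ * α) ^ z)) := by
      have h1 : ∑ j, ∑ p ∈ P, w p * g p (A⁻¹.mulVec (v j)) ^ z
          ≤ ∑ _j : Fin d, M * (c₄ * α) ^ z := Finset.sum_le_sum fun j _ => hG j
      rw [Finset.sum_const, Finset.card_univ, Fintype.card_fin, nsmul_eq_mul] at h1
      have h2 : (0:ℝ) ≤ c * c₂ / (c₁ * c₃ ^ (2*z)) := by positivity
      nlinarith
  _ = c₂ * c₅ / c₁ + (c * c₂ * c₄ ^ z / (c₁ * c₃ ^ (2 * z))) * M * α ^ z * d := by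
      rw [Real.mul_rpow hc₄.le hα.le]
      ring
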